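/- arXiv:1712.08371 — 5 statements merged into one kernel-verified Lean document; each statement's English description precedes it below -/
import Mathlib

section
/- For all complex numbers a, b, z with b not equal to a nonpositive integer, Kummer's transformation holds: ₁F₁(a; b; z) = e^z · ₁F₁(b−a; b; −z). -/
open Complex

/-- The Kummer confluent hypergeometric function `₁F₁(a; b; z)`,
defined by its everywhere convergent power series. -/
noncomputable def kummer (a b z : ℂ) : ℂ :=
  ∑' n : ℕ, ((ascPochhammer ℂ n).eval a / (ascPochhammer ℂ n).eval b) * z ^ n / n.factorial

open Polynomial Finset


noncomputable def pk (n : ℕ) (x : ℂ) : ℂ := (ascPochhammer ℂ n).eval x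

lemma pk_zero (x : ℂ) : pk 0 x = 1 := by simp [pk]

lemma pk_succ (m : ℕ) (x : ℂ) : pk (m+1) x = pk m x * (x + m) := by
  simp [pk, ascPochhammer_succ_eval]

lemma pk_succ_left (m : ℕ) (x : ℂ) : pk (m+1) x = x * pk m (x+1) := by
  simp only [pk, ascPochhammer_succ_left]
  simp [Polynomial.eval_comp, Polynomial.X_mul]
  ring

lemma pk_key : ∀ (n : ℕ) (a b : ℂ),
    ∑ k ∈ range (n+1), (n.choose k : ℂ) * (-1)^k * pk k (b - a) * pk (n-k) (b + k)
    = pk n a := by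
  intro n
  induction n with
  | zero => intro a b; simp [pk]
  | succ n ih =>
    intro a b
    rw [Finset.sum_range_succ']
    have hf0 : ((n+1).choose 0 : ℂ) * (-1)^0 * pk 0 (b - a) * pk (n+1-0) (b + ((0:ℕ):ℂ)) = pk (n+1) b := by
      simp [pk_zero]
    rw [hf0]
    have hsplit : ∀ i ∈ range (n+1),
        ((n+1).choose (i+1) : ℂ) * (-1)^(i+1) * pk (i+1) (b - a) * pk (n+1-(i+1)) (b + ((i+1:ℕ):ℂ))
        = ((n.choose (i+1) : ℂ) * (-1)^(i+1) * pk (i+1) (b - a) * pk (n-i) ((b+1) + (i:ℂ)))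
          - ((n.choose i : ℂ) * (-1)^i * (pk i (b - a) * ((b-a) + i)) * pk (n-i) ((b+1) + (i:ℂ))) := by
      intro i hi
      have e1 : n+1-(i+1) = n-i := Nat.succ_sub_succ n i
      have e2 : (b + ((i+1:ℕ):ℂ)) = (b+1) + (i:ℂ) := by push_cast; ring
      have e3 : (n+1).choose (i+1) = n.choose i + n.choose (i+1) := Nat.choose_succ_succ n i
      rw [e1, e2, e3, ← pk_succ]
      push_cast
      ring
    rw [Finset.sum_congr rfl hsplit, Finset.sum_sub_distrib]
    have hg : ∑ i ∈ range (n+1), (n.choose (i+1) : ℂ) * (-1)^(i+1) * pk (i+1) (b - a) * pk (n-i) ((b+1) + (i:ℂ))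
        = (∑ k ∈ range (n+1), (n.choose k : ℂ) * (-1)^k * pk k (b - a) * ((b+(k:ℂ)) * pk (n-k) ((b+1) + (k:ℂ)))) - pk (n+1) b := by
      have h1 := Finset.sum_range_succ' (fun k => (n.choose k : ℂ) * (-1)^k * pk k (b - a) * pk (n+1-k) (b + (k:ℂ))) (n+1)
      have h2 : ∑ k ∈ range (n+2), (n.choose k : ℂ) * (-1)^k * pk k (b - a) * pk (n+1-k) (b + (k:ℂ))
          = ∑ k ∈ range (n+1), (n.choose k : ℂ) * (-1)^k * pk k (b - a) * ((b+(k:ℂ)) * pk (n-k) ((b+1) + (k:ℂ))) := by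
        rw [Finset.sum_range_succ, Nat.choose_succ_self]
        simp only [Nat.cast_zero, zero_mul, mul_zero, add_zero]
        refine Finset.sum_congr rfl fun k hk => ?_
        have hk' : k ≤ n := Nat.lt_succ_iff.mp (mem_range.mp hk)
        have e1 : n+1-k = (n-k)+1 := by omega
        rw [e1, pk_succ_left]
        ring_nf
      have h3 : ∀ i : ℕ, (fun k => (n.choose k : ℂ) * (-1)^k * pk k (b - a) * pk (n+1-k) (b + (k:ℂ))) (i+1)
          = (n.choose (i+1) : ℂ) * (-1)^(i+1) * pk (i+1) (b - a) * pk (n-i) ((b+1) + (i:ℂ)) := by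
        intro i
        have e1 : n+1-(i+1) = n-i := Nat.succ_sub_succ n i
        have e2 : (b + ((i+1:ℕ):ℂ)) = (b+1) + (i:ℂ) := by push_cast; ring
        simp only [e1, e2]
      simp only [h3] at h1
      have h4 : (n.choose 0 : ℂ) * (-1)^0 * pk 0 (b - a) * pk (n+1-0) (b + ((0:ℕ):ℂ)) = pk (n+1) b := by
        simp [pk_zero]
      rw [h4, h2] at h1
      rw [eq_sub_iff_add_eq]; exact h1.symm
    rw [hg]
    have hih := ih (a+1) (b+1)
    have e5 : (b+1) - (a+1) = b - a := by ring
    rw [e5] at hih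
    have hfinal : ∑ k ∈ range (n+1), (n.choose k : ℂ) * (-1)^k * pk k (b - a) * ((b+(k:ℂ)) * pk (n-k) ((b+1) + (k:ℂ)))
        - ∑ i ∈ range (n+1), (n.choose i : ℂ) * (-1)^i * (pk i (b - a) * ((b-a) + i)) * pk (n-i) ((b+1) + (i:ℂ))
        = a * ∑ k ∈ range (n+1), (n.choose k : ℂ) * (-1)^k * pk k (b - a) * pk (n-k) ((b+1) + (k:ℂ)) := by
      rw [Finset.mul_sum, ← Finset.sum_sub_distrib]
      refine Finset.sum_congr rfl fun k hk => ?_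
      ring
    have : ∑ k ∈ range (n+1), (n.choose k : ℂ) * (-1)^k * pk k (b - a) * ((b+(k:ℂ)) * pk (n-k) ((b+1) + (k:ℂ)))
        - pk (n+1) b
        - ∑ i ∈ range (n+1), (n.choose i : ℂ) * (-1)^i * (pk i (b - a) * ((b-a) + i)) * pk (n-i) ((b+1) + (i:ℂ))
        + pk (n+1) b = a * pk n (a+1) := by
      rw [sub_sub, add_comm (pk (n+1) b), ← sub_sub, sub_add_cancel, hfinal, hih]
    rw [this, ← pk_succ_left]

lemma pk_ne_zero {b : ℂ} (hb : ∀ n : ℕ, b ≠ -(n : ℂ)) (n : ℕ) : pk n b ≠ 0 := by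
  induction n with
  | zero => simp [pk_zero]
  | succ n ih =>
    rw [pk_succ]
    refine mul_ne_zero ih fun h => hb n ?_
    linear_combination h

lemma pk_mul (k m : ℕ) (b : ℂ) : pk k b * pk m (b + k) = pk (k + m) b := by
  have := congrArg (Polynomial.eval b) (ascPochhammer_mul (S := ℂ) k m)
  simpa [pk, Polynomial.eval_comp] using this

lemma pk_shift_ne_zero {b : ℂ} (hb : ∀ n : ℕ, b ≠ -(n : ℂ)) (k m : ℕ) : pk m (b + k) ≠ 0 := by
  refine pk_ne_zero (fun n h => hb (n + k) ?_) m
  push_cast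
  linear_combination h

lemma pk_div_key {b : ℂ} (hb : ∀ n : ℕ, b ≠ -(n : ℂ)) (n : ℕ) (a : ℂ) :
    ∑ k ∈ range (n+1), (n.choose k : ℂ) * (-1)^k * (pk k (b - a) / pk k b)
    = pk n a / pk n b := by
  rw [← pk_key n a b, Finset.sum_div]
  refine Finset.sum_congr rfl fun k hk => ?_
  have hk' : k ≤ n := Nat.lt_succ_iff.mp (mem_range.mp hk)
  have hfac : pk k b * pk (n-k) (b + k) = pk n b := by
    rw [pk_mul, Nat.add_sub_cancel' hk']
  rw [← hfac]
  have h1 := pk_ne_zero hb k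
  have h2 := pk_shift_ne_zero hb k (n-k)
  field_simp

lemma kummer_summable_norm (c b w : ℂ) (hb : ∀ n : ℕ, b ≠ -(n : ℂ)) :
    Summable (fun n : ℕ => ‖pk n c / pk n b * w ^ n / (n.factorial : ℂ)‖) := by
  set f : ℕ → ℂ := fun n => pk n c / pk n b * w ^ n / (n.factorial : ℂ) with hfdef
  obtain ⟨N, hN⟩ := exists_nat_ge (2*‖b‖ + 2*‖c‖ + 8*‖w‖ + 2)
  apply summable_of_ratio_norm_eventually_le (r := 1/2) (by norm_num)
  filter_upwards [Filter.eventually_ge_atTop N] with n hn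
  rw [norm_norm, norm_norm]
  have hnR : (2*‖b‖ + 2*‖c‖ + 8*‖w‖ + 2) ≤ (n:ℝ) := le_trans hN (by exact_mod_cast hn)
  have hb0 : (0:ℝ) ≤ ‖b‖ := norm_nonneg _
  have hc0 : (0:ℝ) ≤ ‖c‖ := norm_nonneg _
  have hw0 : (0:ℝ) ≤ ‖w‖ := norm_nonneg _
  have hbn : (b + (n:ℂ)) ≠ 0 := fun h => hb n (by linear_combination h)
  have hfact : ((n.factorial : ℂ)) ≠ 0 := Nat.cast_ne_zero.mpr n.factorial_ne_zero
  have hn1 : ((n:ℂ) + 1) ≠ 0 := by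
    have : ((n+1 : ℕ) : ℂ) ≠ 0 := Nat.cast_ne_zero.mpr (Nat.succ_ne_zero n)
    push_cast at this; exact this
  have hpkb := pk_ne_zero hb n
  have hrec : f (n+1) = f n * ((c + n) / (b + n) * (w / ((n:ℂ)+1))) := by
    simp only [hfdef, pk_succ, Nat.factorial_succ, Nat.cast_mul, pow_succ]
    push_cast
    field_simp
  have hnb : (n:ℝ) - ‖b‖ ≤ ‖b + (n:ℂ)‖ := by
    have h1 : ‖(n:ℂ)‖ ≤ ‖b + (n:ℂ)‖ + ‖b‖ := by
      calc ‖(n:ℂ)‖ = ‖(b + (n:ℂ)) + (-b)‖ := by ring_nf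
        _ ≤ ‖b + (n:ℂ)‖ + ‖(-b)‖ := norm_add_le _ _
        _ = ‖b + (n:ℂ)‖ + ‖b‖ := by rw [norm_neg]
    have h2 : ‖(n:ℂ)‖ = (n:ℝ) := by simp
    linarith
  have hcn : ‖c + (n:ℂ)‖ ≤ ‖c‖ + n := by
    calc ‖c + (n:ℂ)‖ ≤ ‖c‖ + ‖(n:ℂ)‖ := norm_add_le _ _
      _ = ‖c‖ + n := by simp
  have hbnpos : (0:ℝ) < ‖b + (n:ℂ)‖ := norm_pos_iff.mpr hbn
  have hn1norm : ‖(n:ℂ) + 1‖ = (n:ℝ) + 1 := by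
    have : ((n:ℂ) + 1) = ((n+1 : ℕ) : ℂ) := by push_cast; ring
    rw [this, Complex.norm_natCast]; push_cast; ring
  have hratio : ‖(c + (n:ℂ)) / (b + (n:ℂ)) * (w / ((n:ℂ)+1))‖ ≤ 1/2 := by
    rw [norm_mul, norm_div, norm_div, hn1norm, div_mul_div_comm]
    rw [div_le_iff₀ (by positivity)]
    have key : 2 * ((‖c‖ + n) * ‖w‖) ≤ ((n:ℝ) - ‖b‖) * ((n:ℝ) + 1) := by nlinarith
    have m1 : ‖c + (n:ℂ)‖ * ‖w‖ ≤ (‖c‖ + n) * ‖w‖ := by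
      exact mul_le_mul_of_nonneg_right hcn hw0
    have m2 : ((n:ℝ) - ‖b‖) * ((n:ℝ) + 1) ≤ ‖b + (n:ℂ)‖ * ((n:ℝ) + 1) := by
      exact mul_le_mul_of_nonneg_right hnb (by positivity)
    linarith
  calc ‖f (n+1)‖ = ‖f n‖ * ‖(c + (n:ℂ)) / (b + (n:ℂ)) * (w / ((n:ℂ)+1))‖ := by
        rw [hrec, norm_mul]
    _ ≤ ‖f n‖ * (1/2) := mul_le_mul_of_nonneg_left hratio (norm_nonneg _)
    _ = 1/2 * ‖f n‖ := mul_comm _ _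


/-- Kummer's transformation: `₁F₁(a; b; z) = e^z ₁F₁(b − a; b; −z)`. -/
theorem kummer_transformation (a b z : ℂ) (hb : ∀ n : ℕ, b ≠ -(n : ℂ)) :
    kummer a b z = Complex.exp z * kummer (b - a) b (-z) := by
  have hexp : Complex.exp z = ∑' n : ℕ, z ^ n / n.factorial := by
    rw [Complex.exp_eq_exp_ℂ, NormedSpace.exp_eq_tsum_div]
  set g : ℕ → ℂ := fun k => pk k (b-a) / pk k b * (-z)^k / k.factorial with hgdef
  set f : ℕ → ℂ := fun n => z ^ n / n.factorial with hfdef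
  have hgsum : Summable fun n => ‖g n‖ := kummer_summable_norm (b-a) b (-z) hb
  have hfsum : Summable fun n => ‖f n‖ := by
    have h := Real.summable_pow_div_factorial ‖z‖
    refine h.congr fun n => ?_
    simp [hfdef, norm_div, norm_pow]
  have hcauchy : (∑' k, g k) * (∑' n, f n)
      = ∑' n, ∑ kl ∈ Finset.HasAntidiagonal.antidiagonal n, g kl.1 * f kl.2 :=
    tsum_mul_tsum_eq_tsum_sum_antidiagonal_of_summable_norm hgsum hfsum
  have hterm : ∀ n : ℕ, ∑ kl ∈ Finset.HasAntidiagonal.antidiagonal n, g kl.1 * f kl.2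
      = pk n a / pk n b * z ^ n / n.factorial := by
    intro n
    rw [Finset.Nat.sum_antidiagonal_eq_sum_range_succ (fun i j => g i * f j)]
    have hstep : ∀ k ∈ range (n+1), g k * f (n-k)
        = ((n.choose k : ℂ) * (-1)^k * (pk k (b-a) / pk k b)) * (z ^ n / n.factorial) := by
      intro k hk
      have hk' : k ≤ n := Nat.lt_succ_iff.mp (mem_range.mp hk)
      have hzz : (-z)^k * z^(n-k) = (-1)^k * z^n := by
        rw [neg_pow, mul_assoc, ← pow_add, Nat.add_sub_cancel' hk']
      have hcf : (n.factorial : ℂ) = (n.choose k : ℂ) * k.factorial * (n-k).factorial := by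
        exact_mod_cast congrArg (Nat.cast (R := ℂ))
          (Nat.choose_mul_factorial_mul_factorial hk').symm
      have hkf : ((k.factorial : ℂ)) ≠ 0 := Nat.cast_ne_zero.mpr k.factorial_ne_zero
      have hnkf : (((n-k).factorial : ℂ)) ≠ 0 := Nat.cast_ne_zero.mpr (n-k).factorial_ne_zero
      have hnf : ((n.factorial : ℂ)) ≠ 0 := Nat.cast_ne_zero.mpr n.factorial_ne_zero
      simp only [hgdef, hfdef]
      have hneg : (-z) ^ k = (-1) ^ k * z ^ k := by rw [neg_pow]
      have hnk : z ^ n = z ^ k * z ^ (n-k) := by rw [← pow_add, Nat.add_sub_cancel' hk']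
      rw [hneg, hnk, hcf]
      have hch : ((n.choose k : ℕ) : ℂ) ≠ 0 := Nat.cast_ne_zero.mpr (Nat.choose_pos hk').ne'
      field_simp [pk_ne_zero hb k, hch]
    rw [Finset.sum_congr rfl hstep, ← Finset.sum_mul, pk_div_key hb n a]
    ring
  have hk1 : kummer a b z = ∑' n, pk n a / pk n b * z ^ n / n.factorial := rfl
  have hk2 : kummer (b-a) b (-z) = ∑' k, g k := rfl
  rw [hk1, hk2, hexp, mul_comm, hcauchy, tsum_congr hterm]
end

section
/- For complex a, b with Re(b) > Re(a) > 0 and any z ∈ ℂ, the Euler integral representation holds: ₁F₁(a; b; z) = (Γ(b) / (Γ(a) Γ(b−a))) · ∫₀¹ t^{a−1} (1−t)^{b−a−1} e^{z t} dt. -/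
open Complex

open MeasureTheory Set

lemma Gamma_ascPochhammer_eq (x : ℂ) (hx : 0 < x.re) (n : ℕ) :
    Complex.Gamma (x + n) = Complex.Gamma x * (ascPochhammer ℂ n).eval x := by
  induction n with
  | zero => simp
  | succ n ih =>
    have hxn : x + n ≠ 0 := by
      intro h
      have h' := congrArg Complex.re h
      simp only [Complex.add_re, Complex.natCast_re, Complex.zero_re] at h'
      have hn : (0:ℝ) ≤ (n:ℝ) := Nat.cast_nonneg n
      linarith
    have hstep : x + (n+1 : ℕ) = (x + n) + 1 := by push_cast; ring
    rw [hstep, Complex.Gamma_add_one _ hxn, ih, ascPochhammer_succ_right]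
    simp only [Polynomial.eval_mul, Polynomial.eval_add, Polynomial.eval_X,
      Polynomial.eval_natCast]
    ring

theorem kummer_euler_integral' (a b : ℂ) (ha : 0 < a.re) (hab : a.re < b.re) (z : ℂ) :
    (∑' n : ℕ, ((ascPochhammer ℂ n).eval a / (ascPochhammer ℂ n).eval b) * z ^ n / n.factorial)
      = (Complex.Gamma b / (Complex.Gamma a * Complex.Gamma (b - a))) *
      ∫ t in (0:ℝ)..1, (t : ℂ) ^ (a - 1) * ((1 : ℂ) - (t : ℂ)) ^ (b - a - 1) *
        Complex.exp (z * (t : ℂ)) := by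
  set c := b - a with hc
  have hcre : 0 < c.re := by
    rw [hc, Complex.sub_re]; linarith
  -- the summand functions
  set F : ℕ → ℝ → ℂ := fun n t =>
    (t : ℂ) ^ (a - 1) * ((1 : ℂ) - (t : ℂ)) ^ (c - 1) * ((z * t) ^ n / n.factorial) with hF
  -- pointwise identity on Ioo
  have hpt : ∀ t ∈ Ioo (0:ℝ) 1, ∀ n : ℕ,
      F n t = (z ^ n / n.factorial) * ((t : ℂ) ^ (a + n - 1) * ((1:ℂ) - t) ^ (c - 1)) := by
    intro t ht n
    have ht0 : (t : ℂ) ≠ 0 := by exact_mod_cast ne_of_gt ht.1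
    have : (t : ℂ) ^ (a - 1) * (t : ℂ) ^ n = (t : ℂ) ^ (a + n - 1) := by
      rw [← Complex.cpow_natCast, ← Complex.cpow_add _ _ ht0]
      ring_nf
    rw [hF]
    simp only []
    rw [mul_pow]
    rw [show (t:ℂ)^(a-1) * ((1:ℂ)-t)^(c-1) * ((z^n * (t:ℂ)^n)/ n.factorial)
      = (z^n / n.factorial) * (((t:ℂ)^(a-1) * (t:ℂ)^n) * ((1:ℂ)-t)^(c-1)) by ring, this]
  -- integrability of each F n on Ioo 0 1
  have hbeta : ∀ n : ℕ, IntegrableOn (fun t : ℝ =>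
      (t : ℂ) ^ (a + n - 1) * ((1:ℂ) - t) ^ (c - 1)) (Ioo (0:ℝ) 1) := by
    intro n
    have hre : 0 < (a + n).re := by
      simp only [Complex.add_re, Complex.natCast_re]
      positivity
    have := (Complex.betaIntegral_convergent hre hcre)
    rw [intervalIntegrable_iff_integrableOn_Ioc_of_le zero_le_one] at this
    exact this.mono_set Ioo_subset_Ioc_self
  have hFint : ∀ n : ℕ, IntegrableOn (F n) (Ioo (0:ℝ) 1) := by
    intro n
    exact MeasureTheory.IntegrableOn.congr_fun ((hbeta n).const_mul (z ^ n / n.factorial))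
      (fun t ht => (hpt t ht n).symm) measurableSet_Ioo
  -- the real bound function
  set g : ℝ → ℝ := fun t => ‖(t : ℂ) ^ (a - 1) * ((1 : ℂ) - (t : ℂ)) ^ (c - 1)‖ with hg
  have hgint : IntegrableOn g (Ioo (0:ℝ) 1) := by
    have h0 : IntegrableOn (fun t : ℝ => (t : ℂ) ^ (a - 1) * ((1:ℂ) - t) ^ (c - 1))
        (Ioo (0:ℝ) 1) := by
      have := hbeta 0
      simpa using this
    exact h0.norm
  -- norm bound
  have hnorm : ∀ n : ℕ, ∀ t ∈ Ioo (0:ℝ) 1, ‖F n t‖ ≤ g t * (‖z‖ ^ n / n.factorial) := by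
    intro n t ht
    have h1 : ‖(z * (t:ℂ)) ^ n / (n.factorial : ℂ)‖ ≤ ‖z‖ ^ n / n.factorial := by
      rw [norm_div, norm_pow, norm_mul, Complex.norm_natCast, Complex.norm_real,
        Real.norm_eq_abs]
      have htle : |t| ≤ 1 := by rw [abs_of_pos ht.1]; exact ht.2.le
      gcongr
      exact mul_le_of_le_one_right (norm_nonneg z) htle
    calc ‖F n t‖ = g t * ‖(z * (t:ℂ)) ^ n / (n.factorial : ℂ)‖ := norm_mul _ _
      _ ≤ g t * (‖z‖ ^ n / n.factorial) := mul_le_mul_of_nonneg_left h1 (norm_nonneg _)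
  -- summability of integrals of norms
  have hsum : Summable fun n : ℕ => ∫ t in Ioo (0:ℝ) 1, ‖F n t‖ := by
    apply Summable.of_nonneg_of_le
      (fun n => integral_nonneg fun t => norm_nonneg _)
      (fun n => ?_)
      (((Real.summable_pow_div_factorial ‖z‖).mul_left (∫ t in Ioo (0:ℝ) 1, g t)))
    calc ∫ t in Ioo (0:ℝ) 1, ‖F n t‖
        ≤ ∫ t in Ioo (0:ℝ) 1, g t * (‖z‖ ^ n / n.factorial) := by
          refine setIntegral_mono_on (hFint n).norm
            (hgint.mul_const _) measurableSet_Ioo ?_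
          intro t ht; exact hnorm n t ht
      _ = (∫ t in Ioo (0:ℝ) 1, g t) * (‖z‖ ^ n / n.factorial) := by
          rw [integral_mul_const]
  -- swap sum and integral
  have hswap : ∑' n : ℕ, ∫ t in Ioo (0:ℝ) 1, F n t
      = ∫ t in Ioo (0:ℝ) 1, ∑' n : ℕ, F n t :=
    integral_tsum_of_summable_integral_norm hFint hsum
  -- tsum of F equals the exponential integrand
  have htsum : ∀ t ∈ Ioo (0:ℝ) 1,
      ∑' n : ℕ, F n t = (t : ℂ) ^ (a - 1) * ((1 : ℂ) - (t : ℂ)) ^ (c - 1)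
        * Complex.exp (z * t) := by
    intro t _
    rw [hF]
    simp only []
    rw [tsum_mul_left]
    congr 1
    rw [Complex.exp_eq_exp_ℂ, NormedSpace.exp_eq_tsum_div]
  -- value of each integral: beta function
  have hval : ∀ n : ℕ, ∫ t in Ioo (0:ℝ) 1, F n t
      = (z ^ n / n.factorial) * (Complex.Gamma (a + n) * Complex.Gamma c
          / Complex.Gamma (b + n)) := by
    intro n
    have hre : 0 < (a + n).re := by
      simp only [Complex.add_re, Complex.natCast_re]; positivity
    have hbne : Complex.Gamma (b + n) ≠ 0 := by
      apply Complex.Gamma_ne_zero_of_re_pos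
      simp only [Complex.add_re, Complex.natCast_re]
      have : (0:ℝ) ≤ n := Nat.cast_nonneg n
      linarith
    have hBeta : Complex.Gamma (a+n) * Complex.Gamma c
        = Complex.Gamma (b+n) * Complex.betaIntegral (a+n) c := by
      have := Complex.Gamma_mul_Gamma_eq_betaIntegral hre hcre
      rw [show a + n + c = b + n by rw [hc]; ring] at this
      exact this
    have h1 : ∫ t in Ioo (0:ℝ) 1, F n t
        = (z ^ n / n.factorial) * Complex.betaIntegral (a + n) c := by
      rw [Complex.betaIntegral, intervalIntegral.integral_of_le zero_le_one,
        integral_Ioc_eq_integral_Ioo, ← MeasureTheory.integral_const_mul]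
      exact setIntegral_congr_fun measurableSet_Ioo fun t ht => hpt t ht n
    rw [h1]
    congr 1
    field_simp at hBeta ⊢
    rw [hBeta]
  -- put everything together
  rw [intervalIntegral.integral_of_le zero_le_one, integral_Ioc_eq_integral_Ioo]
  have hIcongr : ∫ t in Ioo (0:ℝ) 1,
      (t : ℂ) ^ (a - 1) * ((1 : ℂ) - (t : ℂ)) ^ (c - 1) * Complex.exp (z * t)
      = ∑' n : ℕ, ∫ t in Ioo (0:ℝ) 1, F n t := by
    rw [hswap]
    exact (setIntegral_congr_fun measurableSet_Ioo fun t ht => (htsum t ht).symm)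
  rw [hIcongr, ← tsum_mul_left]
  refine tsum_congr fun n => ?_
  rw [hval n]
  have hGa : Complex.Gamma a ≠ 0 := Complex.Gamma_ne_zero_of_re_pos ha
  have hGb : Complex.Gamma b ≠ 0 := Complex.Gamma_ne_zero_of_re_pos (by linarith)
  have hGc : Complex.Gamma c ≠ 0 := Complex.Gamma_ne_zero_of_re_pos hcre
  have hGbn : Complex.Gamma (b + n) ≠ 0 := by
    apply Complex.Gamma_ne_zero_of_re_pos
    simp only [Complex.add_re, Complex.natCast_re]
    have : (0:ℝ) ≤ n := Nat.cast_nonneg n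
    linarith
  have hpa := Gamma_ascPochhammer_eq a ha n
  have hpb := Gamma_ascPochhammer_eq b (by linarith) n
  have hbpne : (ascPochhammer ℂ n).eval b ≠ 0 := by
    intro h
    rw [h, mul_zero] at hpb
    exact hGbn hpb
  rw [hpa, hpb]
  have hfac : ((n.factorial : ℂ)) ≠ 0 := Nat.cast_ne_zero.2 n.factorial_ne_zero
  field_simp


/-- Euler integral representation of `₁F₁(a; b; z)` for `Re b > Re a > 0`. -/
theorem kummer_euler_integral (a b : ℂ) (ha : 0 < a.re) (hab : a.re < b.re) (z : ℂ) :
    kummer a b z = (Complex.Gamma b / (Complex.Gamma a * Complex.Gamma (b - a))) *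
      ∫ t in (0:ℝ)..1, (t : ℂ) ^ (a - 1) * ((1 : ℂ) - (t : ℂ)) ^ (b - a - 1) *
        Complex.exp (z * (t : ℂ)) := kummer_euler_integral' a b ha hab z
end

section
/- Let α > 0 be real and a, b ∈ ℂ with Re(b) > Re(a) > 0, and suppose αn + a is not a nonpositive integer for every natural number n. Then for every z ∈ ℂ, the Wright series with equal parameters satisfies the integral representation ∑_{n=0}^∞ (Γ(αn+a)/Γ(αn+b)) · z^n/n! = (1/Γ(b−a)) · ∫₀¹ t^{a−1} (1−t)^{b−a−1} exp(z t^α) dt. -/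
open Complex MeasureTheory Set

/-- Integral representation of the Wright function `₁Ψ₁((α,a);(α,b) | z)` with equal
parameters, for `Re b > Re a > 0`. -/
theorem wright_equal_params_integral (α : ℝ) (hα : 0 < α) (a b : ℂ)
    (ha : 0 < a.re) (hab : a.re < b.re)
    (hpole : ∀ n m : ℕ, (α : ℂ) * (n : ℂ) + a ≠ -(m : ℂ)) (z : ℂ) :
    ∑' n : ℕ, (Complex.Gamma ((α : ℂ) * n + a) / Complex.Gamma ((α : ℂ) * n + b)) *
        z ^ n / n.factorial =
      (1 / Complex.Gamma (b - a)) *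
        ∫ t in (0:ℝ)..1, (t : ℂ) ^ (a - 1) * ((1 : ℂ) - (t : ℂ)) ^ (b - a - 1) *
          Complex.exp (z * (t : ℂ) ^ (α : ℂ)) := by
  have hba : 0 < (b - a).re := by simp only [sub_re]; linarith
  have hΓab : Complex.Gamma (b - a) ≠ 0 := Complex.Gamma_ne_zero_of_re_pos hba
  set F : ℕ → ℝ → ℂ := fun n t =>
    (t : ℂ) ^ (a - 1) * ((1 : ℂ) - (t : ℂ)) ^ (b - a - 1) *
      ((z * (t : ℂ) ^ (α : ℂ)) ^ n / n.factorial) with hF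
  have hre : ∀ n : ℕ, 0 < ((α : ℂ) * n + a).re := by
    intro n
    have h1 : ((α : ℂ) * n + a).re = α * n + a.re := by simp
    rw [h1]; positivity
  -- pointwise identity on Ioc
  have hFeq : ∀ n : ℕ, EqOn (F n) (fun t : ℝ => (z ^ n / n.factorial) *
      ((t : ℂ) ^ ((α : ℂ) * n + a - 1) * ((1 : ℂ) - (t : ℂ)) ^ (b - a - 1)))
      (Ioc (0:ℝ) 1) := by
    intro n t ht
    have ht0 : (t : ℂ) ≠ 0 := by exact_mod_cast ne_of_gt ht.1
    have him : (Complex.log (t : ℂ) * (α : ℂ)).im = 0 := by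
      rw [← Complex.ofReal_log ht.1.le, ← Complex.ofReal_mul]
      exact Complex.ofReal_im _
    have h1 : ((t : ℂ) ^ (α : ℂ)) ^ n = (t : ℂ) ^ ((α : ℂ) * n) := by
      rw [← Complex.cpow_natCast ((t : ℂ) ^ (α : ℂ)) n, ← Complex.cpow_mul]
      · rw [him]; linarith [Real.pi_pos]
      · rw [him]; exact Real.pi_pos.le
    show F n t = _
    rw [hF]
    simp only
    rw [mul_pow, h1]
    have h2 : (t : ℂ) ^ (a - 1) * (t : ℂ) ^ ((α : ℂ) * n) = (t : ℂ) ^ ((α : ℂ) * n + a - 1) := by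
      rw [← Complex.cpow_add _ _ ht0]
      congr 1; ring
    calc (t : ℂ) ^ (a - 1) * (1 - (t : ℂ)) ^ (b - a - 1) *
          ((z ^ n * ((t:ℂ) ^ ((α:ℂ) * n))) / n.factorial)
        = (z ^ n / n.factorial) * (((t : ℂ) ^ (a - 1) * (t : ℂ) ^ ((α : ℂ) * n)) *
            (1 - (t : ℂ)) ^ (b - a - 1)) := by ring
      _ = _ := by rw [h2]
  have hbeta : ∀ n : ℕ, IntervalIntegrable
      (fun t : ℝ => (t : ℂ) ^ ((α : ℂ) * n + a - 1) * ((1 : ℂ) - (t : ℂ)) ^ (b - a - 1))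
      volume 0 1 := fun n => Complex.betaIntegral_convergent (hre n) hba
  have hFint : ∀ n : ℕ, IntegrableOn (F n) (Ioc (0:ℝ) 1) := by
    intro n
    have h := ((hbeta n).const_mul (z ^ n / n.factorial))
    rw [intervalIntegrable_iff_integrableOn_Ioc_of_le zero_le_one] at h
    exact h.congr_fun (fun t ht => (hFeq n ht).symm) measurableSet_Ioc
  -- norm bound
  have hF0 : ∀ t : ℝ, ‖F 0 t‖ = ‖(t : ℂ) ^ (a - 1) * ((1 : ℂ) - (t : ℂ)) ^ (b - a - 1)‖ := by
    intro t; rw [hF]; simp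
  have hFnorm : ∀ n : ℕ, ∀ t ∈ Ioc (0:ℝ) 1,
      ‖F n t‖ ≤ ‖z‖ ^ n / n.factorial * ‖F 0 t‖ := by
    intro n t ht
    have habs : ‖z * (t : ℂ) ^ (α : ℂ)‖ ≤ ‖z‖ := by
      rw [norm_mul]
      have h1 : ‖(t : ℂ) ^ (α : ℂ)‖ = t ^ α := by
        rw [Complex.norm_cpow_eq_rpow_re_of_pos ht.1]
        simp
      rw [h1]
      calc ‖z‖ * t ^ α ≤ ‖z‖ * 1 :=
            mul_le_mul_of_nonneg_left (Real.rpow_le_one ht.1.le ht.2 hα.le) (norm_nonneg z)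
        _ = ‖z‖ := mul_one _
    rw [hF0, hF]
    simp only
    rw [norm_mul, norm_div, Complex.norm_natCast]
    have key : ‖(z * (t:ℂ) ^ (α:ℂ)) ^ n‖ ≤ ‖z‖ ^ n := by
      rw [norm_pow]
      exact pow_le_pow_left₀ (norm_nonneg _) habs n
    calc ‖(t:ℂ) ^ (a-1) * (1 - (t:ℂ)) ^ (b-a-1)‖ * (‖(z * (t:ℂ) ^ (α:ℂ)) ^ n‖ / (n.factorial : ℝ))
        ≤ ‖(t:ℂ) ^ (a-1) * (1 - (t:ℂ)) ^ (b-a-1)‖ * (‖z‖ ^ n / (n.factorial : ℝ)) := by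
          gcongr
      _ = ‖z‖ ^ n / (n.factorial : ℝ) * ‖(t:ℂ) ^ (a-1) * (1 - (t:ℂ)) ^ (b-a-1)‖ := by ring
  have hsum_norm : Summable fun n : ℕ => ∫ t in Ioc (0:ℝ) 1, ‖F n t‖ := by
    apply Summable.of_nonneg_of_le
      (fun n => integral_nonneg fun t => norm_nonneg _)
      (fun n => ?_)
      ((Real.summable_pow_div_factorial ‖z‖).mul_right (∫ t in Ioc (0:ℝ) 1, ‖F 0 t‖))
    calc ∫ t in Ioc (0:ℝ) 1, ‖F n t‖
        ≤ ∫ t in Ioc (0:ℝ) 1, ‖z‖ ^ n / n.factorial * ‖F 0 t‖ :=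
          setIntegral_mono_on (hFint n).norm ((hFint 0).norm.const_mul _)
            measurableSet_Ioc (hFnorm n)
      _ = ‖z‖ ^ n / n.factorial * ∫ t in Ioc (0:ℝ) 1, ‖F 0 t‖ := integral_const_mul _ _
  have hswap : ∑' n : ℕ, ∫ t in Ioc (0:ℝ) 1, F n t = ∫ t in Ioc (0:ℝ) 1, ∑' n : ℕ, F n t :=
    integral_tsum_of_summable_integral_norm (fun n => hFint n) hsum_norm
  have hexp : ∀ w : ℂ, ∑' n : ℕ, w ^ n / n.factorial = Complex.exp w := by
    intro w
    rw [Complex.exp_eq_exp_ℂ, NormedSpace.exp_eq_tsum_div]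
  have htsum : ∀ t : ℝ, ∑' n : ℕ, F n t =
      (t : ℂ) ^ (a - 1) * ((1 : ℂ) - (t : ℂ)) ^ (b - a - 1) *
        Complex.exp (z * (t : ℂ) ^ (α : ℂ)) := by
    intro t
    rw [hF]
    simp only
    rw [tsum_mul_left, hexp]
  -- per-term value
  have hterm : ∀ n : ℕ,
      Complex.Gamma ((α : ℂ) * n + a) / Complex.Gamma ((α : ℂ) * n + b) * z ^ n / n.factorial =
        (1 / Complex.Gamma (b - a)) * ∫ t in Ioc (0:ℝ) 1, F n t := by
    intro n
    have hb' : 0 < ((α : ℂ) * n + b).re := by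
      have h1 : ((α : ℂ) * n + b).re = α * n + b.re := by simp
      rw [h1]
      have : (0:ℝ) < b.re := lt_trans ha hab
      positivity
    have hΓb : Complex.Gamma ((α : ℂ) * n + b) ≠ 0 := Complex.Gamma_ne_zero_of_re_pos hb'
    have key := Complex.Gamma_mul_Gamma_eq_betaIntegral (hre n) hba
    rw [show (α : ℂ) * n + a + (b - a) = (α : ℂ) * n + b from by ring] at key
    have hβ : Complex.betaIntegral ((α : ℂ) * n + a) (b - a) =
        Complex.Gamma ((α : ℂ) * n + a) * Complex.Gamma (b - a) /
          Complex.Gamma ((α : ℂ) * n + b) := by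
      rw [eq_div_iff hΓb, mul_comm]
      exact key.symm
    have hIF : ∫ t in Ioc (0:ℝ) 1, F n t =
        (z ^ n / n.factorial) * Complex.betaIntegral ((α : ℂ) * n + a) (b - a) := by
      rw [setIntegral_congr_fun measurableSet_Ioc (hFeq n), integral_const_mul]
      congr 1
      rw [Complex.betaIntegral, intervalIntegral.integral_of_le zero_le_one]
    rw [hIF, hβ]
    have hfac : ((n.factorial : ℂ)) ≠ 0 := Nat.cast_ne_zero.mpr n.factorial_ne_zero
    field_simp
  calc ∑' n : ℕ, Complex.Gamma ((α : ℂ) * n + a) / Complex.Gamma ((α : ℂ) * n + b) *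
        z ^ n / n.factorial
      = ∑' n : ℕ, (1 / Complex.Gamma (b - a)) * ∫ t in Ioc (0:ℝ) 1, F n t := tsum_congr hterm
    _ = (1 / Complex.Gamma (b - a)) * ∑' n : ℕ, ∫ t in Ioc (0:ℝ) 1, F n t := tsum_mul_left
    _ = (1 / Complex.Gamma (b - a)) * ∫ t in Ioc (0:ℝ) 1, ∑' n : ℕ, F n t := by rw [hswap]
    _ = _ := by
        rw [intervalIntegral.integral_of_le zero_le_one]
        congr 1
        exact setIntegral_congr_fun measurableSet_Ioc fun t _ => htsum t
end

section
/- Let α, β > 0 be real with κ := 1 + β − α > 0, and let a, b ∈ ℂ be such that αn + a is not a nonpositive integer for every natural number n. Then the Wright series ∑_{n=0}^∞ (Γ(αn+a)/Γ(βn+b)) · z^n/n! converges absolutely for every z ∈ ℂ; in particular ₁Ψ₁((α,a); (β,b) | ·) is an entire function of z. -/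
open Complex Filter MeasureTheory intervalIntegral Topology

/-- Log-convexity upper bound: `Γ(x+c) ≤ Γ(x)·(x+c)^c` for `x > 0`, `c > 0`. -/
lemma gamma_ratio_upper {x c : ℝ} (hx : 0 < x) (hc : 0 < c) :
    Real.Gamma (x + c) ≤ Real.Gamma x * (x + c) ^ c := by
  have hxc : (0:ℝ) < x + c := by linarith
  have h1 := Real.convexOn_log_Gamma.slope_mono_adjacent (x := x) (y := x + c) (z := x + c + 1)
    (Set.mem_Ioi.2 hx) (Set.mem_Ioi.2 (by linarith)) (by linarith) (by linarith)
  have hG1 : Real.Gamma (x + c + 1) = (x + c) * Real.Gamma (x + c) := by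
    rw [Real.Gamma_add_one (ne_of_gt hxc)]
  have hGpos := Real.Gamma_pos_of_pos hx
  have hGcpos := Real.Gamma_pos_of_pos hxc
  simp only [Function.comp] at h1
  rw [hG1, Real.log_mul (ne_of_gt hxc) (ne_of_gt hGcpos)] at h1
  have h2 : (Real.log (Real.Gamma (x+c)) - Real.log (Real.Gamma x)) / c ≤ Real.log (x + c) := by
    have : x + c - x = c := by ring
    have : x + c + 1 - (x + c) = 1 := by ring
    calc (Real.log (Real.Gamma (x+c)) - Real.log (Real.Gamma x)) / c
        = (Real.log (Real.Gamma (x+c)) - Real.log (Real.Gamma x)) / (x + c - x) := by ring_nf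
      _ ≤ (Real.log (x+c) + Real.log (Real.Gamma (x+c)) - Real.log (Real.Gamma (x+c))) /
            (x + c + 1 - (x+c)) := h1
      _ = Real.log (x + c) := by ring_nf
  have h3 : Real.log (Real.Gamma (x + c)) ≤ Real.log (Real.Gamma x) + c * Real.log (x + c) := by
    rw [div_le_iff₀ hc] at h2; linarith
  have h4 : Real.log (Real.Gamma x * (x + c) ^ c)
      = Real.log (Real.Gamma x) + c * Real.log (x + c) := by
    rw [Real.log_mul (ne_of_gt hGpos) (ne_of_gt (Real.rpow_pos_of_pos hxc c)),
      Real.log_rpow hxc]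
  rw [← Real.log_le_log_iff hGcpos (mul_pos hGpos (Real.rpow_pos_of_pos hxc c)), h4]
  exact h3

/-- Log-convexity lower bound: `Γ(x)·(x-1)^c ≤ Γ(x+c)` for `x > 1`, `c > 0`. -/
lemma gamma_ratio_lower {x c : ℝ} (hx : 1 < x) (hc : 0 < c) :
    Real.Gamma x * (x - 1) ^ c ≤ Real.Gamma (x + c) := by
  have hx0 : (0:ℝ) < x := by linarith
  have hx1 : (0:ℝ) < x - 1 := by linarith
  have hxc : (0:ℝ) < x + c := by linarith
  have h1 := Real.convexOn_log_Gamma.slope_mono_adjacent (x := x - 1) (y := x) (z := x + c)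
    (Set.mem_Ioi.2 hx1) (Set.mem_Ioi.2 hxc) (by linarith) (by linarith)
  have hG1 : Real.Gamma x = (x - 1) * Real.Gamma (x - 1) := by
    have := Real.Gamma_add_one (ne_of_gt hx1)
    rw [show x - 1 + 1 = x by ring] at this
    exact this
  have hGpos := Real.Gamma_pos_of_pos hx0
  have hGx1pos := Real.Gamma_pos_of_pos hx1
  have hGcpos := Real.Gamma_pos_of_pos hxc
  simp only [Function.comp] at h1
  have hlog : Real.log (Real.Gamma x) - Real.log (Real.Gamma (x-1)) = Real.log (x - 1) := by
    rw [hG1, Real.log_mul (ne_of_gt hx1) (ne_of_gt hGx1pos)]; ring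
  have h2 : Real.log (x - 1) ≤
      (Real.log (Real.Gamma (x + c)) - Real.log (Real.Gamma x)) / c := by
    calc Real.log (x - 1)
        = (Real.log (Real.Gamma x) - Real.log (Real.Gamma (x-1))) / (x - (x-1)) := by
          rw [hlog]; ring_nf
      _ ≤ (Real.log (Real.Gamma (x + c)) - Real.log (Real.Gamma x)) / (x + c - x) := h1
      _ = (Real.log (Real.Gamma (x + c)) - Real.log (Real.Gamma x)) / c := by ring_nf
  have h3 : Real.log (Real.Gamma x) + c * Real.log (x - 1)
      ≤ Real.log (Real.Gamma (x + c)) := by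
    rw [le_div_iff₀ hc] at h2; linarith
  have h4 : Real.log (Real.Gamma x * (x - 1) ^ c)
      = Real.log (Real.Gamma x) + c * Real.log (x - 1) := by
    rw [Real.log_mul (ne_of_gt hGpos) (ne_of_gt (Real.rpow_pos_of_pos hx1 c)),
      Real.log_rpow hx1]
  rw [← Real.log_le_log_iff (mul_pos hGpos (Real.rpow_pos_of_pos hx1 c)) hGcpos, h4]
  exact h3
open Complex Filter MeasureTheory intervalIntegral Topology Set

/-- `‖Γ(s)‖ ≤ Γ(Re s)` for `Re s > 0`. -/
lemma norm_Gamma_le {s : ℂ} (hs : 0 < s.re) : ‖Complex.Gamma s‖ ≤ Real.Gamma s.re := by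
  rw [Complex.Gamma_eq_integral hs, Real.Gamma_eq_integral hs, Complex.GammaIntegral]
  refine (MeasureTheory.norm_integral_le_integral_norm _).trans_eq ?_
  refine setIntegral_congr_fun measurableSet_Ioi fun x hx => ?_
  rw [norm_mul, Complex.norm_real, Real.norm_of_nonneg (Real.exp_pos _).le,
    Complex.norm_cpow_eq_rpow_re_of_pos hx, Complex.sub_re, Complex.one_re]

/-- `‖Γ(x+iy)‖ ≥ Γ(x)·‖Γ(1+iy)‖` for real `x > 1`. -/
lemma norm_Gamma_ge {x : ℝ} (hx : 1 < x) (y : ℝ) :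
    Real.Gamma x * ‖Complex.Gamma (1 + y * I)‖ ≤ ‖Complex.Gamma ((x:ℂ) + y * I)‖ := by
  have hx1 : (0:ℝ) < x - 1 := by linarith
  set u : ℂ := ((x - 1 : ℝ) : ℂ) with hu
  set v : ℂ := 1 + y * I with hv
  have hure : 0 < u.re := by simpa [hu] using hx1
  have hvre : 0 < v.re := by simp [hv]
  have huv : u + v = (x:ℂ) + y * I := by push_cast [hu, hv]; ring
  have key := Complex.Gamma_mul_Gamma_eq_betaIntegral hure hvre
  rw [huv] at key
  -- bound the beta integral
  have hbeta : ‖Complex.betaIntegral u v‖ ≤ 1 / (x - 1) := by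
    rw [Complex.betaIntegral]
    refine (intervalIntegral.norm_integral_le_integral_norm zero_le_one).trans ?_
    have hle : ∀ t ∈ Icc (0:ℝ) 1,
        ‖(t:ℂ) ^ (u - 1) * (1 - (t:ℂ)) ^ (v - 1)‖ ≤ t ^ (x - 2) := by
      intro t ht
      rw [norm_mul]
      have h2 : ‖(1 - (t:ℂ)) ^ (v - 1)‖ ≤ 1 := by
        rcases lt_or_eq_of_le ht.2 with h | h
        · have h1t : (0:ℝ) < 1 - t := by linarith
          rw [show (1 : ℂ) - (t:ℂ) = ((1 - t : ℝ) : ℂ) by push_cast; ring,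
            Complex.norm_cpow_eq_rpow_re_of_pos h1t]
          simp [hv, Complex.add_re, Complex.sub_re]
        · subst h
          simp only [Complex.ofReal_one, sub_self]
          rcases eq_or_ne (v - 1) 0 with h0 | h0
          · simp [h0]
          · rw [Complex.zero_cpow h0]; simp
          
      have h1 : ‖(t:ℂ) ^ (u - 1)‖ ≤ t ^ (x - 2) := by
        rcases lt_or_eq_of_le ht.1 with h | h
        · rw [Complex.norm_cpow_eq_rpow_re_of_pos h]
          apply le_of_eq; congr 1
          simp [hu, Complex.sub_re]; ring
        · subst h
          rcases eq_or_ne (u - 1) 0 with h0 | h0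
          · have : x = 2 := by
              have := congrArg Complex.re h0
              simp [hu, Complex.sub_re] at this
              linarith
            simp [h0, this]
          · rw [Complex.ofReal_zero, Complex.zero_cpow h0]
            simp only [norm_zero]
            exact Real.rpow_nonneg le_rfl _
      calc ‖(t:ℂ) ^ (u - 1)‖ * ‖(1 - (t:ℂ)) ^ (v - 1)‖
          ≤ t ^ (x - 2) * 1 := by
            exact mul_le_mul h1 h2 (norm_nonneg _) (Real.rpow_nonneg ht.1 _)
        _ = t ^ (x - 2) := by ring
    have hint1 : IntervalIntegrable (fun t : ℝ => t ^ (x - 2)) volume 0 1 :=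
      intervalIntegral.intervalIntegrable_rpow' (by linarith)
    have hint2 : IntervalIntegrable
        (fun t : ℝ => ‖(t:ℂ) ^ (u - 1) * (1 - (t:ℂ)) ^ (v - 1)‖) volume 0 1 :=
      (Complex.betaIntegral_convergent hure hvre).norm
    calc ∫ t in (0:ℝ)..1, ‖(t:ℂ) ^ (u - 1) * (1 - (t:ℂ)) ^ (v - 1)‖
        ≤ ∫ t in (0:ℝ)..1, t ^ (x - 2) :=
          intervalIntegral.integral_mono_on zero_le_one hint2 hint1 hle
      _ = 1 / (x - 1) := by
          rw [integral_rpow (Or.inl (by linarith))]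
          rw [Real.one_rpow, Real.zero_rpow (by intro h; linarith [show x = 1 by linarith])]
          ring_nf
  have hGu : ‖Complex.Gamma u‖ = Real.Gamma (x - 1) := by
    rw [hu, Complex.Gamma_ofReal, Complex.norm_real,
      Real.norm_of_nonneg (Real.Gamma_pos_of_pos hx1).le]
  have := congrArg norm key
  rw [norm_mul, norm_mul, hGu] at this
  have hfinal : Real.Gamma (x - 1) * ‖Complex.Gamma v‖
      ≤ ‖Complex.Gamma ((x:ℂ) + y * I)‖ * (1 / (x - 1)) := by
    rw [this]
    exact mul_le_mul_of_nonneg_left hbeta (norm_nonneg _)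
  have hG1 : Real.Gamma x = (x - 1) * Real.Gamma (x - 1) := by
    have := Real.Gamma_add_one (ne_of_gt hx1)
    rw [show x - 1 + 1 = x by ring] at this
    exact this
  rw [hG1]
  rw [div_eq_mul_inv, one_mul] at hfinal
  have := mul_le_mul_of_nonneg_left hfinal (le_of_lt hx1)
  calc (x - 1) * Real.Gamma (x - 1) * ‖Complex.Gamma v‖
      = (x - 1) * (Real.Gamma (x - 1) * ‖Complex.Gamma v‖) := by ring
    _ ≤ (x - 1) * (‖Complex.Gamma ((x:ℂ) + y * I)‖ * (x - 1)⁻¹) := this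
    _ = ‖Complex.Gamma ((x:ℂ) + y * I)‖ := by field_simp

open Complex

/-- The Wright series `₁Ψ₁((α,a);(β,b) | z) = ∑ Γ(αn+a)/Γ(βn+b) · zⁿ/n!` converges
absolutely for every `z ∈ ℂ` when `α, β > 0` and `κ = 1 + β − α > 0`. -/
theorem wright_series_summable (α β : ℝ) (hα : 0 < α) (hβ : 0 < β) (hκ : 0 < 1 + β - α)
    (a b : ℂ) (hpole : ∀ n m : ℕ, (α : ℂ) * (n : ℂ) + a ≠ -(m : ℂ)) (z : ℂ) :
    Summable fun n : ℕ =>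
      ‖(Complex.Gamma ((α : ℂ) * n + a) / Complex.Gamma ((β : ℂ) * n + b)) *
        z ^ n / n.factorial‖ := by
  by_cases hz : z = 0
  · subst hz
    apply summable_of_ne_finset_zero (s := {0})
    intro n hn
    have hn0 : n ≠ 0 := by simpa using hn
    simp [zero_pow hn0]
  set R := ‖z‖ with hR
  have hR0 : 0 < R := norm_pos_iff.2 hz
  set A := a.re with hA
  set B := b.re with hB
  set C := ‖Complex.Gamma (1 + (b.im : ℂ) * I)‖ with hC
  have hCpos : 0 < C := by
    rw [hC, norm_pos_iff]
    apply Complex.Gamma_ne_zero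
    intro m h
    have := congrArg Complex.re h
    simp at this
    have : (0:ℝ) ≤ m := Nat.cast_nonneg m
    linarith
  set g : ℕ → ℝ := fun n =>
    Real.Gamma (α * n + A) * R ^ n / (Real.Gamma (β * n + B) * C * n.factorial) with hgdef
  -- eventual positivity of arguments
  have t1 : Filter.Tendsto (fun n : ℕ => α * n + A) Filter.atTop Filter.atTop :=
    Filter.tendsto_atTop_add_const_right _ A
      (Filter.Tendsto.const_mul_atTop hα tendsto_natCast_atTop_atTop)
  have t2 : Filter.Tendsto (fun n : ℕ => β * n + B) Filter.atTop Filter.atTop :=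
    Filter.tendsto_atTop_add_const_right _ B
      (Filter.Tendsto.const_mul_atTop hβ tendsto_natCast_atTop_atTop)
  have e1 : ∀ᶠ n : ℕ in Filter.atTop, 1 ≤ α * n + A := t1.eventually_ge_atTop 1
  have e2 : ∀ᶠ n : ℕ in Filter.atTop, 2 ≤ β * n + B := t2.eventually_ge_atTop 2
  -- the key ratio bound, via a tendsto-to-zero argument
  set D : ℝ := 2 * α + |A| with hD
  have hDpos : 0 < D := by positivity
  have t3 : Filter.Tendsto (fun n : ℕ => (β/2) * n + (B - 1)) Filter.atTop Filter.atTop :=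
    Filter.tendsto_atTop_add_const_right _ (B - 1)
      (Filter.Tendsto.const_mul_atTop (by linarith) tendsto_natCast_atTop_atTop)
  have e3 : ∀ᶠ n : ℕ in Filter.atTop, (β/2) * n ≤ β * n + B - 1 := by
    filter_upwards [t3.eventually_ge_atTop 0] with n hn
    have hnn : (0:ℝ) ≤ (n:ℝ) := Nat.cast_nonneg n
    nlinarith
  have hP : Filter.Tendsto
      (fun n : ℕ => (α * n + A + α) ^ α * R / ((β * n + B - 1) ^ β * (n + 1)))
      Filter.atTop (𝓝 0) := by
    have hK : Filter.Tendsto (fun n : ℕ => (D ^ α * R / (β/2) ^ β) * (n:ℝ) ^ (-(1 + β - α)))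
        Filter.atTop (𝓝 0) := by
      have h0 := (tendsto_rpow_neg_atTop hκ).comp tendsto_natCast_atTop_atTop
      have := h0.const_mul (D ^ α * R / (β/2) ^ β)
      simpa using this
    apply squeeze_zero' ?_ ?_ hK
    · filter_upwards [e1, e2] with n h1 h2
      have hb1 : (0:ℝ) ≤ α * n + A + α := by linarith
      have hb2 : (0:ℝ) < β * n + B - 1 := by linarith
      positivity
    · filter_upwards [e1, e2, e3, Filter.eventually_ge_atTop 1] with n h1 h2 h3 hn1
      have hnpos : (0:ℝ) < (n:ℝ) := by exact_mod_cast hn1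
      have hn1' : (1:ℝ) ≤ (n:ℝ) := by exact_mod_cast hn1
      have hb1 : (0:ℝ) ≤ α * n + A + α := by linarith
      have hb2 : (0:ℝ) < β * n + B - 1 := by linarith
      have hnum : (α * n + A + α) ^ α ≤ D ^ α * (n:ℝ) ^ α := by
        rw [← Real.mul_rpow hDpos.le hnpos.le]
        apply Real.rpow_le_rpow hb1 _ hα.le
        have hAle : A ≤ |A| := le_abs_self A
        have ha1 : α * 1 ≤ α * n := mul_le_mul_of_nonneg_left hn1' hα.le
        have ha2 : |A| * 1 ≤ |A| * n := mul_le_mul_of_nonneg_left hn1' (abs_nonneg A)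
        nlinarith
      have hden : (β/2) ^ β * (n:ℝ) ^ β ≤ (β * n + B - 1) ^ β := by
        rw [← Real.mul_rpow (by linarith) hnpos.le]
        exact Real.rpow_le_rpow (by positivity) h3 hβ.le
      have hd2 : (0:ℝ) < (β/2) ^ β * (n:ℝ) ^ β * n := by positivity
      calc (α * n + A + α) ^ α * R / ((β * n + B - 1) ^ β * (n + 1))
          ≤ D ^ α * (n:ℝ) ^ α * R / ((β/2) ^ β * (n:ℝ) ^ β * n) := by
            apply div_le_div₀ (by positivity)
              (mul_le_mul_of_nonneg_right hnum hR0.le) hd2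
            apply mul_le_mul hden (by linarith) hnpos.le
            exact (Real.rpow_pos_of_pos hb2 β).le
        _ = (D ^ α * R / (β/2) ^ β) * (n:ℝ) ^ (-(1 + β - α)) := by
            have hpowid : (n:ℝ) ^ (-(1 + β - α)) * ((n:ℝ) ^ β * (n:ℝ)) = (n:ℝ) ^ α := by
              rw [← mul_assoc, ← Real.rpow_add hnpos, ← Real.rpow_add_one (ne_of_gt hnpos)]
              congr 1
              ring
            rw [← hpowid]
            have hb : ((β/2) ^ β : ℝ) ≠ 0 := by positivity
            field_simp
  have e4 : ∀ᶠ n : ℕ in Filter.atTop,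
      (α * n + A + α) ^ α * R ≤ 1/2 * ((β * n + B - 1) ^ β * (n + 1)) := by
    filter_upwards [hP.eventually (eventually_le_nhds (by norm_num : (0:ℝ) < 1/2)), e2]
      with n h h2
    have hb2 : (0:ℝ) < β * n + B - 1 := by linarith
    have hdpos : (0:ℝ) < (β * n + B - 1) ^ β * (n + 1) := by positivity
    rw [div_le_iff₀ hdpos] at h
    linarith
  -- summability of the real majorant via the ratio test
  have hgsum : Summable g := by
    apply summable_of_ratio_norm_eventually_le (r := 1/2) (by norm_num)
    filter_upwards [e1, e2, e4] with n h1 h2 h4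
    have hx0 : (0:ℝ) < α * n + A := by linarith
    have hy1 : (1:ℝ) < β * n + B := by linarith
    have hGx := Real.Gamma_pos_of_pos hx0
    have hGy := Real.Gamma_pos_of_pos (by linarith : (0:ℝ) < β * n + B)
    have hGxa := Real.Gamma_pos_of_pos (by linarith : (0:ℝ) < α * n + A + α)
    have hGyb := Real.Gamma_pos_of_pos (by linarith : (0:ℝ) < β * n + B + β)
    have hfacpos : (0:ℝ) < (n.factorial : ℝ) := by exact_mod_cast n.factorial_pos
    have hcast1 : α * ((n:ℕ)+1 : ℕ) + A = α * n + A + α := by push_cast; ring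
    have hcast2 : β * ((n:ℕ)+1 : ℕ) + B = β * n + B + β := by push_cast; ring
    have hfac : (((n+1).factorial : ℕ) : ℝ) = (n.factorial : ℝ) * (n + 1) := by
      push_cast [Nat.factorial_succ]; ring
    have hgn1 : g (n+1) = Real.Gamma (α * n + A + α) * R ^ (n+1) /
        (Real.Gamma (β * n + B + β) * C * ((n.factorial : ℝ) * (n + 1))) := by
      rw [hgdef]
      simp only
      rw [hcast1, hcast2, hfac]
    have hgn : g n = Real.Gamma (α * n + A) * R ^ n /
        (Real.Gamma (β * n + B) * C * (n.factorial : ℝ)) := rfl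
    have hgnpos : 0 < g n := by rw [hgn]; positivity
    have hgn1pos : 0 < g (n+1) := by rw [hgn1]; positivity
    rw [Real.norm_of_nonneg hgn1pos.le, Real.norm_of_nonneg hgnpos.le]
    have hup := gamma_ratio_upper (x := α * n + A) (c := α) hx0 hα
    have hlo := gamma_ratio_lower (x := β * n + B) (c := β) hy1 hβ
    have hrb : (0:ℝ) < (β * n + B - 1) ^ β :=
      Real.rpow_pos_of_pos (by linarith) β
    calc g (n+1)
        = Real.Gamma (α * n + A + α) * R ^ (n+1) /
            (Real.Gamma (β * n + B + β) * C * ((n.factorial : ℝ) * (n + 1))) := hgn1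
      _ ≤ (Real.Gamma (α * n + A) * (α * n + A + α) ^ α * (R ^ n * R)) /
            ((Real.Gamma (β * n + B) * (β * n + B - 1) ^ β) * C *
              ((n.factorial : ℝ) * (n + 1))) := by
          apply div_le_div₀ (by positivity)
          · rw [pow_succ]
            exact mul_le_mul_of_nonneg_right hup (by positivity)
          · positivity
          · apply mul_le_mul_of_nonneg_right _ (by positivity)
            exact mul_le_mul_of_nonneg_right hlo hCpos.le
      _ = g n * ((α * n + A + α) ^ α * R / ((β * n + B - 1) ^ β * (n + 1))) := by
          rw [hgn]
          field_simp
      _ ≤ g n * (1/2) := by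
          apply mul_le_mul_of_nonneg_left _ hgnpos.le
          rw [div_le_iff₀ (by positivity)]
          linarith
      _ = 1/2 * g n := by ring
  -- compare the complex series with the real majorant
  apply Summable.of_norm_bounded_eventually_nat hgsum
  filter_upwards [e1, e2] with n h1 h2
  have hx0 : (0:ℝ) < α * n + A := by linarith
  have hy1 : (1:ℝ) < β * n + B := by linarith
  have hGy := Real.Gamma_pos_of_pos (by linarith : (0:ℝ) < β * n + B)
  have hfacpos : (0:ℝ) < (n.factorial : ℝ) := by exact_mod_cast n.factorial_pos
  have hre1 : ((α:ℂ) * n + a).re = α * n + A := by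
    simp [Complex.add_re, Complex.mul_re, hA]
  have hnum : ‖Complex.Gamma ((α:ℂ) * n + a)‖ ≤ Real.Gamma (α * n + A) := by
    have := norm_Gamma_le (s := (α:ℂ) * n + a) (by rw [hre1]; exact hx0)
    rwa [hre1] at this
  have hden : Real.Gamma (β * n + B) * C ≤ ‖Complex.Gamma ((β:ℂ) * n + b)‖ := by
    have hcast : ((β * n + B : ℝ) : ℂ) + (b.im : ℂ) * I = (β:ℂ) * n + b := by
      calc ((β * n + B : ℝ) : ℂ) + (b.im : ℂ) * I
          = (β:ℂ) * n + ((b.re : ℂ) + (b.im : ℂ) * I) := by push_cast [hB]; ring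
        _ = (β:ℂ) * n + b := by rw [Complex.re_add_im]
    have := norm_Gamma_ge hy1 b.im
    rwa [hcast] at this
  have hdenpos : (0:ℝ) < ‖Complex.Gamma ((β:ℂ) * n + b)‖ :=
    lt_of_lt_of_le (by positivity) hden
  have hnorm : ‖(Complex.Gamma ((α:ℂ) * n + a) / Complex.Gamma ((β:ℂ) * n + b)) *
      z ^ n / (n.factorial : ℂ)‖ =
      ‖Complex.Gamma ((α:ℂ) * n + a)‖ * R ^ n /
        (‖Complex.Gamma ((β:ℂ) * n + b)‖ * (n.factorial : ℝ)) := by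
    rw [norm_div, norm_mul, norm_div, norm_pow]
    rw [Complex.norm_natCast]
    rw [div_mul_eq_mul_div, div_div]
  rw [norm_norm, hnorm]
  apply div_le_div₀ (by positivity)
    (mul_le_mul_of_nonneg_right hnum (by positivity)) (by positivity)
  exact mul_le_mul_of_nonneg_right hden hfacpos.le
end

section
/- There exist ε > 0 and a function τ : ℂ → ℂ analytic on the ball of radius ε about 0 such that τ(0) = 1, τ(w) − log τ(w) − 1 = w²/2 for all |w| < ε (with log the principal branch), and whose Taylor coefficients at 0 of orders 1 through 5 are 1, 1/3, 1/36, −1/270, 1/4320 respectively; that is, τ(w) = 1 + w + (1/3)w² + (1/36)w³ − (1/270)w⁴ + (1/4320)w⁵ + O(w⁶) as w → 0. -/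
open Complex Filter Topology Metric

noncomputable def uu : ℂ → ℂ := fun x => if x = 0 then 1 else 2 * (x - Complex.log (1 + x)) / x ^ 2

lemma uu0 : uu 0 = 1 := by simp [uu]

lemma logTaylor3 (x : ℂ) : Complex.logTaylor 3 x = x - x ^ 2 / 2 := by
  simp [Complex.logTaylor, Finset.sum_range_succ]
  ring

lemma uu_bound {x : ℂ} (hx : ‖x‖ < 1/2) : ‖uu x - 1‖ ≤ 2 * ‖x‖ := by
  rcases eq_or_ne x 0 with rfl | hx0
  · simp [uu0]
  · have hx1 : ‖x‖ < 1 := by linarith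
    have hb := Complex.norm_log_sub_logTaylor_le 2 hx1
    rw [logTaylor3] at hb
    have hxne : (x:ℂ) ^ 2 ≠ 0 := pow_ne_zero 2 hx0
    have h1 : uu x - 1 = -2 * (Complex.log (1 + x) - (x - x ^ 2 / 2)) / x ^ 2 := by
      rw [uu, if_neg hx0]
      field_simp
      ring
    rw [h1]
    rw [norm_div, norm_mul]
    have hnx2 : ‖x ^ 2‖ = ‖x‖ ^ 2 := by simp [norm_pow]
    rw [hnx2]
    have hxpos : (0:ℝ) < ‖x‖ := norm_pos_iff.mpr hx0
    have hx2pos : (0:ℝ) < ‖x‖ ^ 2 := by positivity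
    rw [div_le_iff₀ hx2pos]
    have hn2 : ‖(-2 : ℂ)‖ = 2 := by norm_num
    rw [hn2]
    have hinv : (1 - ‖x‖)⁻¹ ≤ 2 := by
      rw [inv_le_comm₀ (by linarith) (by norm_num)]
      linarith
    have hb' : ‖Complex.log (1 + x) - (x - x ^ 2 / 2)‖ ≤ ‖x‖ ^ 3 * 2 / 3 := by
      refine hb.trans ?_
      have : ‖x‖ ^ (2+1) * (1 - ‖x‖)⁻¹ / ((2:ℕ) + 1) = ‖x‖ ^ 3 * (1 - ‖x‖)⁻¹ / 3 := by
        norm_num [Nat.factorial]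
      rw [this]
      gcongr
    nlinarith [hb', hxpos, norm_nonneg x, pow_nonneg (norm_nonneg x) 3]

lemma uu_contAt : ContinuousAt uu 0 := by
  have h0 : Tendsto (fun x : ℂ => uu x - 1) (𝓝 0) (𝓝 0) := by
    refine squeeze_zero_norm' (a := fun x : ℂ => 2 * ‖x‖) ?_ ?_
    · filter_upwards [Metric.ball_mem_nhds (0:ℂ) (by norm_num : (0:ℝ) < 1/2)] with x hx
      exact uu_bound (by simpa [Metric.mem_ball, dist_eq_norm] using hx)
    · have h2 : Tendsto (fun x : ℂ => ‖x‖) (𝓝 0) (𝓝 (‖(0:ℂ)‖)) :=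
        (continuous_norm.tendsto (0:ℂ))
      simp only [norm_zero] at h2
      simpa using h2.const_mul 2
  have h3 : Tendsto uu (𝓝 0) (𝓝 1) := by
    have := h0.add (tendsto_const_nhds : Tendsto (fun _ : ℂ => (1:ℂ)) (𝓝 0) (𝓝 1))
    simpa using this
  rw [ContinuousAt, uu0]
  exact h3

lemma uu_an : AnalyticAt ℂ uu 0 := by
  apply Complex.analyticAt_of_differentiable_on_punctured_nhds_of_continuousAt ?_ uu_contAt
  have h1 : ∀ᶠ z in 𝓝[≠] (0:ℂ), ‖z‖ < 1 := by
    apply eventually_nhdsWithin_of_eventually_nhds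
    filter_upwards [Metric.ball_mem_nhds (0:ℂ) (by norm_num : (0:ℝ) < 1)] with x hx
    simpa [Metric.mem_ball, dist_eq_norm] using hx
  filter_upwards [h1, self_mem_nhdsWithin] with z hz1 hz0
  have hz0' : z ≠ 0 := hz0
  have hgd : DifferentiableAt ℂ (fun x : ℂ => 2 * (x - Complex.log (1 + x)) / x ^ 2) z := by
    have hlog : DifferentiableAt ℂ (fun x : ℂ => Complex.log (1 + x)) z := by
      apply DifferentiableAt.clog
      · exact (differentiableAt_const _).add differentiableAt_id
      · exact Complex.mem_slitPlane_of_norm_lt_one hz1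
    exact (((differentiableAt_id.sub hlog).const_mul 2).div (differentiableAt_id.pow 2)
      (pow_ne_zero 2 hz0'))
  apply hgd.congr_of_eventuallyEq
  filter_upwards [isOpen_compl_singleton.mem_nhds hz0'] with y hy
  exact if_neg hy

lemma uu_id {x : ℂ} (hx : ‖x‖ < 1) : x ^ 2 * uu x = 2 * (x - Complex.log (1 + x)) := by
  rcases eq_or_ne x 0 with rfl | hx0
  · simp
  · rw [uu, if_neg hx0]
    field_simp

noncomputable def vv : ℂ → ℂ := fun x => Complex.exp (Complex.log (uu x) / 2)

lemma vv0 : vv 0 = 1 := by simp [vv, uu0]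

lemma vv_an : AnalyticAt ℂ vv 0 := by
  have h1 : AnalyticAt ℂ (fun x => Complex.log (uu x)) 0 :=
    uu_an.clog (by rw [uu0]; exact one_mem_slitPlane)
  exact (h1.div analyticAt_const two_ne_zero).cexp

lemma vv_sq {x : ℂ} (hx : uu x ≠ 0) : vv x ^ 2 = uu x := by
  rw [vv, sq, ← Complex.exp_add]
  have : Complex.log (uu x) / 2 + Complex.log (uu x) / 2 = Complex.log (uu x) := by ring
  rw [this, Complex.exp_log hx]

noncomputable def WW : ℂ → ℂ := fun x => x * vv x

lemma WW_an : AnalyticAt ℂ WW 0 := by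
  have : AnalyticAt ℂ (fun x : ℂ => x) 0 := analyticAt_id
  exact this.mul vv_an

lemma WW0 : WW 0 = 0 := by simp [WW]

lemma WW_hasDerivAt : HasDerivAt WW 1 0 := by
  have h1 : HasDerivAt vv (deriv vv 0) 0 := vv_an.differentiableAt.hasDerivAt
  have h2 := (hasDerivAt_id (0:ℂ)).mul h1
  have h3 : HasDerivAt WW (1 * vv 0 + id 0 * deriv vv 0) 0 := h2
  simpa [vv0] using h3

lemma WW_strict : HasStrictDerivAt WW 1 0 := by
  obtain ⟨p, hp⟩ := WW_an
  have h1 := hp.hasStrictDerivAt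
  have h2 : (p 1 fun _ => 1) = 1 := by
    rw [← hp.deriv]
    exact WW_hasDerivAt.deriv
  rwa [h2] at h1

lemma WW_sq_ev : ∀ᶠ x in 𝓝 (0:ℂ), WW x ^ 2 / 2 = x - Complex.log (1 + x) ∧ ‖x‖ < 1/2 := by
  have hne : ∀ᶠ x in 𝓝 (0:ℂ), uu x ≠ 0 := by
    have : ContinuousAt uu 0 := uu_an.continuousAt
    exact this.eventually_ne (by rw [uu0]; exact one_ne_zero)
  have hlt : ∀ᶠ x in 𝓝 (0:ℂ), ‖x‖ < 1/2 := by
    filter_upwards [Metric.ball_mem_nhds (0:ℂ) (by norm_num : (0:ℝ) < 1/2)] with x hx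
    simpa [Metric.mem_ball, dist_eq_norm] using hx
  filter_upwards [hne, hlt] with x h1 h2
  refine ⟨?_, h2⟩
  have h3 : WW x ^ 2 = x ^ 2 * uu x := by
    rw [WW]
    rw [mul_pow, vv_sq h1]
  rw [h3, uu_id (by linarith)]
  ring

noncomputable def Phi : OpenPartialHomeomorph ℂ ℂ :=
  (WW_strict.hasStrictFDerivAt_equiv one_ne_zero).toOpenPartialHomeomorph WW

noncomputable def XX : ℂ → ℂ := Phi.symm

lemma XX0 : XX 0 = 0 := by
  have h := (WW_strict.hasStrictFDerivAt_equiv one_ne_zero).localInverse_apply_image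
  rw [WW0] at h
  exact h

lemma XX_right : ∀ᶠ t in 𝓝 (0:ℂ), WW (XX t) = t := by
  have h := (WW_strict.hasStrictFDerivAt_equiv one_ne_zero).eventually_right_inverse
  rw [WW0] at h
  exact h

lemma XX_strict : HasStrictDerivAt XX 1 0 := by
  have h := HasStrictDerivAt.to_localInverse (hf := WW_strict) (hf' := one_ne_zero)
  rw [WW0, inv_one] at h
  exact h

lemma XX_an : AnalyticAt ℂ XX 0 := by
  have hsrc := (WW_strict.hasStrictFDerivAt_equiv one_ne_zero).mem_toOpenPartialHomeomorph_source
  have hcoe := (WW_strict.hasStrictFDerivAt_equiv one_ne_zero).toOpenPartialHomeomorph_coe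
  have han : AnalyticAt ℂ (↑Phi) 0 := by
    rw [show ((Phi : ℂ → ℂ)) = WW from hcoe]; exact WW_an
  have hfd : fderiv ℂ (↑Phi : ℂ → ℂ) 0
      = ↑(ContinuousLinearEquiv.unitsEquivAut ℂ (Units.mk0 (1:ℂ) one_ne_zero)) := by
    rw [show ((Phi : ℂ → ℂ)) = WW from hcoe]
    exact (WW_strict.hasStrictFDerivAt_equiv one_ne_zero).hasFDerivAt.fderiv
  have := Phi.analyticAt_symm' hsrc han hfd
  have hP0 : Phi 0 = 0 := by rw [show ((Phi : ℂ → ℂ)) = WW from hcoe]; exact WW0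
  rw [hP0] at this
  exact this

noncomputable def tt : ℂ → ℂ := fun t => 1 + XX t

lemma tt0 : tt 0 = 1 := by simp [tt, XX0]

lemma tt_an : AnalyticAt ℂ tt 0 := analyticAt_const.add XX_an

lemma tt_d1 : deriv tt 0 = 1 := by
  have h : deriv XX 0 = 1 := XX_strict.hasDerivAt.deriv
  show deriv (fun t => 1 + XX t) 0 = 1
  rw [deriv_const_add]
  exact h

lemma tt_ev : ∀ᶠ t in 𝓝 (0:ℂ),
    (tt t - Complex.log (tt t) - 1 = t ^ 2 / 2 ∧ ‖tt t - 1‖ < 1/2 ∧ AnalyticAt ℂ tt t) := by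
  have hXc : Tendsto XX (𝓝 0) (𝓝 0) := by
    have := XX_strict.hasDerivAt.differentiableAt.continuousAt
    rwa [ContinuousAt, XX0] at this
  have hXev := hXc.eventually WW_sq_ev
  filter_upwards [XX_right, hXev, tt_an.eventually_analyticAt] with t h1 h2 h3
  have ht1 : tt t - 1 = XX t := by simp only [tt]; ring
  refine ⟨?_, by rw [ht1]; exact h2.2, h3⟩
  have : tt t - Complex.log (tt t) - 1 = XX t - Complex.log (1 + XX t) := by
    simp only [tt]; ring_nf
  rw [this, ← h2.1, h1]

lemma deriv_eq_on_open {B : Set ℂ} (hB : IsOpen B) {F G F' G' : ℂ → ℂ}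
    (hF : ∀ t ∈ B, HasDerivAt F (F' t) t) (hG : ∀ t ∈ B, HasDerivAt G (G' t) t)
    (h : ∀ t ∈ B, F t = G t) : ∀ t ∈ B, F' t = G' t := by
  intro t ht
  have hFG : F =ᶠ[𝓝 t] G := Filter.eventuallyEq_of_mem (hB.mem_nhds ht) h
  exact (hF t ht).unique ((hG t ht).congr_of_eventuallyEq hFG)

/-- Reversion of the mapping `½w² = τ − log τ − 1`: there is an analytic function `τ(w)`
near `0` with `τ(0) = 1`, satisfying `τ(w) − log τ(w) − 1 = w²/2`, whose Taylor expansion is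
`τ(w) = 1 + w + w²/3 + w³/36 − w⁴/270 + w⁵/4320 + O(w⁶)`. -/
theorem tau_reversion :
    ∃ ε > (0 : ℝ), ∃ τ : ℂ → ℂ,
      AnalyticOnNhd ℂ τ (Metric.ball 0 ε) ∧
      τ 0 = 1 ∧
      (∀ w ∈ Metric.ball (0 : ℂ) ε, τ w - Complex.log (τ w) - 1 = w ^ 2 / 2) ∧
      iteratedDeriv 1 τ 0 / (Nat.factorial 1) = 1 ∧
      iteratedDeriv 2 τ 0 / (Nat.factorial 2) = 1 / 3 ∧
      iteratedDeriv 3 τ 0 / (Nat.factorial 3) = 1 / 36 ∧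
      iteratedDeriv 4 τ 0 / (Nat.factorial 4) = -(1 / 270) ∧
      iteratedDeriv 5 τ 0 / (Nat.factorial 5) = 1 / 4320 := by
  obtain ⟨ε, hε, hb⟩ := Metric.eventually_nhds_iff_ball.mp tt_ev
  have hBo : IsOpen (Metric.ball (0:ℂ) ε) := Metric.isOpen_ball
  have h0B : (0:ℂ) ∈ Metric.ball (0:ℂ) ε := Metric.mem_ball_self hε
  have hA0 : AnalyticOnNhd ℂ tt (Metric.ball (0:ℂ) ε) := fun t ht => (hb t ht).2.2
  have hEqB : ∀ t ∈ Metric.ball (0:ℂ) ε, tt t - Complex.log (tt t) - 1 = t ^ 2 / 2 :=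
    fun t ht => (hb t ht).1
  have hslit : ∀ t ∈ Metric.ball (0:ℂ) ε, tt t ∈ slitPlane := by
    intro t ht
    have h2 := (hb t ht).2.1
    refine Or.inl ?_
    have hre : |(tt t - 1).re| ≤ ‖tt t - 1‖ := by
      exact Complex.abs_re_le_norm _
    have h3 : (tt t).re = 1 + (tt t - 1).re := by simp
    rw [h3]
    have := neg_abs_le ((tt t - 1).re)
    linarith
  have hne0 : ∀ t ∈ Metric.ball (0:ℂ) ε, tt t ≠ 0 := fun t ht => slitPlane_ne_zero (hslit t ht)
  set d1 : ℂ → ℂ := deriv tt with hd1e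
  set d2 : ℂ → ℂ := deriv d1 with hd2e
  set d3 : ℂ → ℂ := deriv d2 with hd3e
  set d4 : ℂ → ℂ := deriv d3 with hd4e
  set d5 : ℂ → ℂ := deriv d4 with hd5e
  have hA1 : AnalyticOnNhd ℂ d1 (Metric.ball (0:ℂ) ε) := hA0.deriv
  have hA2 : AnalyticOnNhd ℂ d2 (Metric.ball (0:ℂ) ε) := hA1.deriv
  have hA3 : AnalyticOnNhd ℂ d3 (Metric.ball (0:ℂ) ε) := hA2.deriv
  have hA4 : AnalyticOnNhd ℂ d4 (Metric.ball (0:ℂ) ε) := hA3.deriv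
  have hA5 : AnalyticOnNhd ℂ d5 (Metric.ball (0:ℂ) ε) := hA4.deriv
  have hd0 : ∀ t ∈ Metric.ball (0:ℂ) ε, HasDerivAt tt (d1 t) t :=
    fun t ht => (hA0 t ht).differentiableAt.hasDerivAt
  have hd1 : ∀ t ∈ Metric.ball (0:ℂ) ε, HasDerivAt d1 (d2 t) t :=
    fun t ht => (hA1 t ht).differentiableAt.hasDerivAt
  have hd2 : ∀ t ∈ Metric.ball (0:ℂ) ε, HasDerivAt d2 (d3 t) t :=
    fun t ht => (hA2 t ht).differentiableAt.hasDerivAt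
  have hd3 : ∀ t ∈ Metric.ball (0:ℂ) ε, HasDerivAt d3 (d4 t) t :=
    fun t ht => (hA3 t ht).differentiableAt.hasDerivAt
  have hd4 : ∀ t ∈ Metric.ball (0:ℂ) ε, HasDerivAt d4 (d5 t) t :=
    fun t ht => (hA4 t ht).differentiableAt.hasDerivAt
  have hd5 : ∀ t ∈ Metric.ball (0:ℂ) ε, HasDerivAt d5 (deriv d5 t) t :=
    fun t ht => (hA5 t ht).differentiableAt.hasDerivAt
  -- first implicit-derivative identity
  have H1 : ∀ t ∈ Metric.ball (0:ℂ) ε, d1 t * (tt t - 1) = t * tt t := by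
    intro t ht
    have hlog : HasDerivAt (fun s => Complex.log (tt s)) ((tt t)⁻¹ * d1 t) t :=
      (Complex.hasDerivAt_log (hslit t ht)).comp t (hd0 t ht)
    have hL : HasDerivAt (fun s => tt s - Complex.log (tt s) - 1)
        (d1 t - (tt t)⁻¹ * d1 t) t := ((hd0 t ht).sub hlog).sub_const 1
    have hR : HasDerivAt (fun s : ℂ => s ^ 2 / 2) t t := by
      have h := (hasDerivAt_pow 2 t).div_const 2
      norm_num [Nat.factorial] at h
      exact h
    have hL' : HasDerivAt (fun s => tt s - Complex.log (tt s) - 1) t t :=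
      hR.congr_of_eventuallyEq (Filter.eventuallyEq_of_mem (hBo.mem_nhds ht) hEqB)
    have key := hL.unique hL'
    have hne := hne0 t ht
    field_simp at key
    linear_combination key
  have H2 : ∀ t ∈ Metric.ball (0:ℂ) ε,
      d2 t * (tt t - 1) + d1 t * d1 t = 1 * tt t + t * d1 t :=
    deriv_eq_on_open hBo
      (fun t ht => ((hd1 t ht).mul ((hd0 t ht).sub_const 1)))
      (fun t ht => (hasDerivAt_id t).mul (hd0 t ht)) H1
  have H2' : ∀ t ∈ Metric.ball (0:ℂ) ε,
      d2 t * (tt t - 1) + d1 t * d1 t = tt t + t * d1 t := by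
    intro t ht; linear_combination H2 t ht
  have H3 : ∀ t ∈ Metric.ball (0:ℂ) ε,
      (d3 t * (tt t - 1) + d2 t * d1 t) + (d2 t * d1 t + d1 t * d2 t)
        = d1 t + (1 * d1 t + t * d2 t) :=
    deriv_eq_on_open hBo
      (fun t ht => ((hd2 t ht).mul ((hd0 t ht).sub_const 1)).add ((hd1 t ht).mul (hd1 t ht)))
      (fun t ht => (hd0 t ht).add ((hasDerivAt_id t).mul (hd1 t ht))) H2'
  have H3' : ∀ t ∈ Metric.ball (0:ℂ) ε,
      d3 t * (tt t - 1) + 3 * (d1 t * d2 t) = 2 * d1 t + t * d2 t := by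
    intro t ht; linear_combination H3 t ht
  have H4 : ∀ t ∈ Metric.ball (0:ℂ) ε,
      (d4 t * (tt t - 1) + d3 t * d1 t) + 3 * (d2 t * d2 t + d1 t * d3 t)
        = 2 * d2 t + (1 * d2 t + t * d3 t) :=
    deriv_eq_on_open hBo
      (fun t ht => ((hd3 t ht).mul ((hd0 t ht).sub_const 1)).add
        (((hd1 t ht).mul (hd2 t ht)).const_mul 3))
      (fun t ht => ((hd1 t ht).const_mul 2).add ((hasDerivAt_id t).mul (hd2 t ht))) H3'
  have H4' : ∀ t ∈ Metric.ball (0:ℂ) ε,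
      d4 t * (tt t - 1) + 4 * (d1 t * d3 t) + 3 * (d2 t * d2 t)
        = 3 * d2 t + t * d3 t := by
    intro t ht; linear_combination H4 t ht
  have H5 : ∀ t ∈ Metric.ball (0:ℂ) ε,
      ((d5 t * (tt t - 1) + d4 t * d1 t) + 4 * (d2 t * d3 t + d1 t * d4 t))
          + 3 * (d3 t * d2 t + d2 t * d3 t)
        = 3 * d3 t + (1 * d3 t + t * d4 t) :=
    deriv_eq_on_open hBo
      (fun t ht => (((hd4 t ht).mul ((hd0 t ht).sub_const 1)).add
        (((hd1 t ht).mul (hd3 t ht)).const_mul 4)).add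
        (((hd2 t ht).mul (hd2 t ht)).const_mul 3))
      (fun t ht => ((hd2 t ht).const_mul 3).add ((hasDerivAt_id t).mul (hd3 t ht))) H4'
  have H5' : ∀ t ∈ Metric.ball (0:ℂ) ε,
      d5 t * (tt t - 1) + 5 * (d1 t * d4 t) + 10 * (d2 t * d3 t)
        = 4 * d3 t + t * d4 t := by
    intro t ht; linear_combination H5 t ht
  have H6 : ∀ t ∈ Metric.ball (0:ℂ) ε,
      ((deriv d5 t * (tt t - 1) + d5 t * d1 t) + 5 * (d2 t * d4 t + d1 t * d5 t))
          + 10 * (d3 t * d3 t + d2 t * d4 t)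
        = 4 * d4 t + (1 * d4 t + t * d5 t) :=
    deriv_eq_on_open hBo
      (fun t ht => (((hd5 t ht).mul ((hd0 t ht).sub_const 1)).add
        (((hd1 t ht).mul (hd4 t ht)).const_mul 5)).add
        (((hd2 t ht).mul (hd3 t ht)).const_mul 10))
      (fun t ht => ((hd3 t ht).const_mul 4).add ((hasDerivAt_id t).mul (hd4 t ht))) H5'
  -- evaluations at 0
  have e1 : d1 0 = 1 := tt_d1
  have e2 : d2 0 = 2/3 := by
    have h := H3' 0 h0B
    rw [tt0, e1] at h
    linear_combination h / 3
  have e3 : d3 0 = 1/6 := by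
    have h := H4' 0 h0B
    rw [tt0, e1, e2] at h
    linear_combination h / 4
  have e4 : d4 0 = -4/45 := by
    have h := H5' 0 h0B
    rw [tt0, e1, e2, e3] at h
    linear_combination h / 5
  have e5 : d5 0 = 1/36 := by
    have h := H6 0 h0B
    rw [tt0, e1, e2, e3, e4] at h
    linear_combination h / 6
  refine ⟨ε, hε, tt, hA0, tt0, hEqB, ?_, ?_, ?_, ?_, ?_⟩
  · rw [iteratedDeriv_one, ← hd1e, e1]
    norm_num [Nat.factorial]
  · rw [iteratedDeriv_succ, iteratedDeriv_one, ← hd1e, ← hd2e, e2]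
    norm_num [Nat.factorial]
  · rw [iteratedDeriv_succ, iteratedDeriv_succ, iteratedDeriv_one, ← hd1e, ← hd2e, ← hd3e, e3]
    norm_num [Nat.factorial]
  · rw [iteratedDeriv_succ, iteratedDeriv_succ, iteratedDeriv_succ, iteratedDeriv_one,
      ← hd1e, ← hd2e, ← hd3e, ← hd4e, e4]
    norm_num [Nat.factorial]
  · rw [iteratedDeriv_succ, iteratedDeriv_succ, iteratedDeriv_succ, iteratedDeriv_succ,
      iteratedDeriv_one, ← hd1e, ← hd2e, ← hd3e, ← hd4e, ← hd5e, e5]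
    norm_num [Nat.factorial]
end
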